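/- For every α ∈ (0,1] and η ∈ (0,α) there is a constant C < ∞, depending only on α and η, with the following property. Let (X,μ) be a probability space, let s : X → S, t : X → T and r : X → R be measurable maps into finite sets such that r is coarser than both s and t (there exist functions f : S → R and g : T → R with r = f ∘ s = g ∘ t), and set I := I_μ(s;t|r). Then for every measurable U ⊆ X with μ(U) ≥ α there is a finite subset S₀ ⊆ U such that |S₀| ≤ |R|·exp(C·(I + 1)), where |R| is the cardinality of R, and μ( U ∩ { x : ∃ w ∈ U, t(x) = t(w) and ∃ z ∈ S₀, s(w) = s(z) } ) > μ(U) − η. -/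

import Mathlib

open MeasureTheory

/-- Shannon entropy of a finite-valued map, with natural logarithm. -/
noncomputable def finEntropy {X S : Type*} [MeasurableSpace X] [Fintype S]
    (μ : Measure X) (s : X → S) : ℝ :=
  ∑ i : S, Real.negMulLog ((μ (s ⁻¹' {i})).toReal)

/-- Conditional mutual information `I_μ(s;t|r)` of finite-valued maps. -/
noncomputable def finCondMutualInfo {X S T R : Type*} [MeasurableSpace X]
    [Fintype S] [Fintype T] [Fintype R]
    (μ : Measure X) (s : X → S) (t : X → T) (r : X → R) : ℝ :=
  finEntropy μ (fun x => (s x, r x)) + finEntropy μ (fun x => (t x, r x))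
    - finEntropy μ (fun x => (s x, t x, r x)) - finEntropy μ r

open Finset
open scoped Classical

set_option linter.unusedSectionVars false

namespace EffCov

noncomputable def plog (x : ℝ) : ℝ := x * Real.log x

@[simp] lemma plog_zero : plog 0 = 0 := by simp [plog]

section Abstract

variable {S T R : Type*} [Fintype S] [Fintype T] [Fintype R]

noncomputable def mS (q : S → T → ℝ) (i : S) : ℝ := ∑ j, q i j
noncomputable def mT (q : S → T → ℝ) (j : T) : ℝ := ∑ i, q i j
noncomputable def mR (f : S → R) (q : S → T → ℝ) (ρ : R) : ℝ :=
  ∑ i, if f i = ρ then mS q i else 0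

noncomputable def Jfun (f : S → R) (q : S → T → ℝ) : ℝ :=
  (∑ i, ∑ j, plog (q i j)) + (∑ ρ, plog (mR f q ρ))
    - (∑ i, plog (mS q i)) - (∑ j, plog (mT q j))

noncomputable def Lf (f : S → R) (q : S → T → ℝ) (i : S) (j : T) : ℝ :=
  Real.log (q i j * mR f q (f i) / (mS q i * mT q j))

variable {q q' : S → T → ℝ} {f : S → R} {g : T → R}

lemma mS_nonneg (hq : ∀ i j, 0 ≤ q i j) (i : S) : 0 ≤ mS q i :=
  sum_nonneg fun j _ => hq i j

lemma mT_nonneg (hq : ∀ i j, 0 ≤ q i j) (j : T) : 0 ≤ mT q j :=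
  sum_nonneg fun i _ => hq i j

lemma mR_nonneg (hq : ∀ i j, 0 ≤ q i j) (ρ : R) : 0 ≤ mR f q ρ :=
  sum_nonneg fun i _ => by
    by_cases h : f i = ρ <;> simp [h, mS_nonneg hq]

lemma q_le_mS (hq : ∀ i j, 0 ≤ q i j) (i : S) (j : T) : q i j ≤ mS q i :=
  single_le_sum (fun j _ => hq i j) (mem_univ j)

lemma q_le_mT (hq : ∀ i j, 0 ≤ q i j) (i : S) (j : T) : q i j ≤ mT q j :=
  single_le_sum (fun i _ => hq i j) (mem_univ i)

lemma mS_le_mR (hq : ∀ i j, 0 ≤ q i j) (i : S) : mS q i ≤ mR f q (f i) := by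
  have h := single_le_sum (f := fun i' => if f i' = f i then mS q i' else 0)
    (fun i' _ => by by_cases h : f i' = f i <;> simp [h, mS_nonneg hq]) (mem_univ i)
  simpa [mR] using h

lemma tot_eq : ∑ j, mT q j = ∑ i, mS q i := by
  unfold mS mT; rw [Finset.sum_comm]

lemma sum_mR : ∑ ρ, mR f q ρ = ∑ i, mS q i := by
  unfold mR
  rw [Finset.sum_comm]
  simp

lemma mR_eq_T (hsupp : ∀ i j, q i j ≠ 0 → f i = g j) (ρ : R) :
    mR f q ρ = ∑ j, if g j = ρ then mT q j else 0 := by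
  unfold mR mS mT
  have h1 : ∀ i : S, (if f i = ρ then (∑ j, q i j) else 0) = ∑ j, if f i = ρ then q i j else 0 := by
    intro i; split <;> simp
  rw [Finset.sum_congr rfl fun i _ => h1 i, Finset.sum_comm]
  refine Finset.sum_congr rfl fun j _ => ?_
  have h2 : ∀ i : S, (if f i = ρ then q i j else 0) = if g j = ρ then q i j else 0 := by
    intro i
    rcases eq_or_ne (q i j) 0 with h | h
    · simp [h]
    · rw [hsupp i j h]
  rw [Finset.sum_congr rfl fun i _ => h2 i]
  split <;> simp

lemma Jfun_eq (hq : ∀ i j, 0 ≤ q i j) :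
    Jfun f q = ∑ i, ∑ j, q i j * Lf f q i j := by
  have hS : ∑ i, plog (mS q i) = ∑ i, ∑ j, q i j * Real.log (mS q i) := by
    refine sum_congr rfl fun i _ => ?_
    rw [plog]; unfold mS; rw [Finset.sum_mul]
  have hT : ∑ j, plog (mT q j) = ∑ i, ∑ j, q i j * Real.log (mT q j) := by
    rw [Finset.sum_comm]
    refine sum_congr rfl fun j _ => ?_
    rw [plog]; unfold mT; rw [Finset.sum_mul]
  have hR : ∑ ρ, plog (mR f q ρ) = ∑ i, ∑ j, q i j * Real.log (mR f q (f i)) := by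
    have e1 : ∀ ρ, plog (mR f q ρ) = ∑ i, if f i = ρ then mS q i * Real.log (mR f q ρ) else 0 := by
      intro ρ
      rw [plog]; unfold mR; rw [Finset.sum_mul]
      refine sum_congr rfl fun i _ => ?_; split <;> simp
    rw [sum_congr rfl fun ρ _ => e1 ρ, Finset.sum_comm]
    refine sum_congr rfl fun i _ => ?_
    have e2 : (∑ ρ, if f i = ρ then mS q i * Real.log (mR f q ρ) else 0)
        = mS q i * Real.log (mR f q (f i)) := by
      rw [Finset.sum_ite_eq]; simp
    rw [e2]; unfold mS; rw [Finset.sum_mul]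
  have key : ∀ i j, q i j * Lf f q i j
      = plog (q i j) + q i j * Real.log (mR f q (f i))
        - q i j * Real.log (mS q i) - q i j * Real.log (mT q j) := by
    intro i j
    rcases eq_or_ne (q i j) 0 with h | h
    · simp [h]
    · have h1 : 0 < q i j := (hq i j).lt_of_ne (Ne.symm h)
      have h2 : 0 < mS q i := lt_of_lt_of_le h1 (q_le_mS hq i j)
      have h3 : 0 < mT q j := lt_of_lt_of_le h1 (q_le_mT hq i j)
      have h4 : 0 < mR f q (f i) := lt_of_lt_of_le h2 (mS_le_mR hq i)
      rw [Lf, Real.log_div (by positivity) (by positivity),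
        Real.log_mul h1.ne' h4.ne', Real.log_mul h2.ne' h3.ne', plog]
      ring
  rw [sum_congr rfl fun i (_ : i ∈ univ) => sum_congr rfl fun j (_ : j ∈ univ) => key i j]
  rw [Jfun, hS, hT, hR]
  simp only [Finset.sum_add_distrib, Finset.sum_sub_distrib]

lemma key_lb (hq : ∀ i j, 0 ≤ q i j) (i : S) (j : T) (h : q i j ≠ 0) :
    q i j - mS q i * mT q j / mR f q (f i) ≤ q i j * Lf f q i j := by
  have h1 : 0 < q i j := (hq i j).lt_of_ne (Ne.symm h)
  have h2 : 0 < mS q i := lt_of_lt_of_le h1 (q_le_mS hq i j)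
  have h3 : 0 < mT q j := lt_of_lt_of_le h1 (q_le_mT hq i j)
  have h4 : 0 < mR f q (f i) := lt_of_lt_of_le h2 (mS_le_mR hq i)
  have hx : (0:ℝ) < mS q i * mT q j / (q i j * mR f q (f i)) := by positivity
  have hlog := Real.log_le_sub_one_of_pos hx
  have hL : Lf f q i j = - Real.log (mS q i * mT q j / (q i j * mR f q (f i))) := by
    rw [Lf, ← Real.log_inv]
    congr 1
    field_simp
  have h5 : q i j * Real.log (mS q i * mT q j / (q i j * mR f q (f i)))
      ≤ q i j * (mS q i * mT q j / (q i j * mR f q (f i))) - q i j := by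
    have := mul_le_mul_of_nonneg_left hlog h1.le
    rw [mul_sub, mul_one] at this
    exact this
  have hqx : q i j * (mS q i * mT q j / (q i j * mR f q (f i)))
      = mS q i * mT q j / mR f q (f i) := by
    field_simp
  rw [hL]
  rw [hqx] at h5
  linarith

lemma sumb (hq : ∀ i j, 0 ≤ q i j) (hsupp : ∀ i j, q i j ≠ 0 → f i = g j) :
    (∑ i, ∑ j, if q i j ≠ 0 then mS q i * mT q j / mR f q (f i) else 0) ≤ ∑ i, mS q i := by
  refine sum_le_sum fun i _ => ?_
  have h1 : (∑ j, if q i j ≠ 0 then mS q i * mT q j / mR f q (f i) else 0)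
      ≤ ∑ j, if g j = f i then mS q i * mT q j / mR f q (f i) else 0 := by
    refine sum_le_sum fun j _ => ?_
    by_cases h : q i j = 0
    · simp only [h, ne_eq, not_true_eq_false, if_false]
      split
      · exact div_nonneg (mul_nonneg (mS_nonneg hq i) (mT_nonneg hq j)) (mR_nonneg hq _)
      · exact le_rfl
    · have hg : g j = f i := (hsupp i j h).symm
      simp [h, hg]
  have h2 : (∑ j, if g j = f i then mS q i * mT q j / mR f q (f i) else 0)
      = mS q i / mR f q (f i) * ∑ j, (if g j = f i then mT q j else 0) := by
    rw [Finset.mul_sum]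
    refine sum_congr rfl fun j _ => ?_
    split
    · ring
    · simp
  refine h1.trans ?_
  rw [h2, ← mR_eq_T hsupp (f i)]
  by_cases h0 : mR f q (f i) = 0
  · rw [h0]; simpa using mS_nonneg hq i
  · rw [div_mul_cancel₀ _ h0]

lemma gibbs (hq : ∀ i j, 0 ≤ q i j) (hsupp : ∀ i j, q i j ≠ 0 → f i = g j) :
    0 ≤ Jfun f q := by
  rw [Jfun_eq hq]
  have h : ∀ i j, (if q i j ≠ 0 then q i j - mS q i * mT q j / mR f q (f i) else 0)
      ≤ q i j * Lf f q i j := by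
    intro i j
    by_cases h : q i j = 0
    · simp [h]
    · rw [if_pos h]; exact key_lb hq i j h
  have h2 : (∑ i, ∑ j, if q i j ≠ 0 then q i j - mS q i * mT q j / mR f q (f i) else 0)
      ≤ ∑ i, ∑ j, q i j * Lf f q i j :=
    sum_le_sum fun i _ => sum_le_sum fun j _ => h i j
  have h3 : (∑ i, ∑ j, if q i j ≠ 0 then q i j - mS q i * mT q j / mR f q (f i) else 0)
      = (∑ i, ∑ j, q i j)
        - (∑ i, ∑ j, if q i j ≠ 0 then mS q i * mT q j / mR f q (f i) else 0) := by
    rw [← Finset.sum_sub_distrib]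
    refine sum_congr rfl fun i _ => ?_
    rw [← Finset.sum_sub_distrib]
    refine sum_congr rfl fun j _ => ?_
    by_cases h : q i j = 0 <;> simp [h]
  have h4 := sumb hq hsupp
  have h5 : (∑ i, ∑ j, q i j) = ∑ i, mS q i := rfl
  linarith

lemma markov (hq : ∀ i j, 0 ≤ q i j) (hsupp : ∀ i j, q i j ≠ 0 → f i = g j)
    (htot : ∑ i, mS q i ≤ 1) {K : ℝ} (hK : 0 ≤ K) :
    K * (∑ i, ∑ j, if q i j ≠ 0 ∧ ¬ (q i j * mR f q (f i) ≤ Real.exp K * (mS q i * mT q j))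
          then q i j else 0)
      ≤ Jfun f q + 1 := by
  rw [Jfun_eq hq]
  have h : ∀ i j,
      (if q i j ≠ 0 ∧ ¬ (q i j * mR f q (f i) ≤ Real.exp K * (mS q i * mT q j))
          then K * q i j else 0)
        - (if q i j ≠ 0 then mS q i * mT q j / mR f q (f i) else 0)
      ≤ q i j * Lf f q i j := by
    intro i j
    by_cases h0 : q i j = 0
    · simp [h0]
    · rw [if_pos h0]
      have h1 : 0 < q i j := (hq i j).lt_of_ne (Ne.symm h0)
      have h2 : 0 < mS q i := lt_of_lt_of_le h1 (q_le_mS hq i j)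
      have h3 : 0 < mT q j := lt_of_lt_of_le h1 (q_le_mT hq i j)
      have h4 : 0 < mR f q (f i) := lt_of_lt_of_le h2 (mS_le_mR hq i)
      have hb : (0:ℝ) ≤ mS q i * mT q j / mR f q (f i) := by positivity
      by_cases hbad : q i j ≠ 0 ∧ ¬ (q i j * mR f q (f i) ≤ Real.exp K * (mS q i * mT q j))
      · rw [if_pos hbad]
        have hgt : Real.exp K < q i j * mR f q (f i) / (mS q i * mT q j) :=
          (lt_div_iff₀ (by positivity)).2 (by linarith [not_le.1 hbad.2])
        have hKL : K ≤ Lf f q i j := by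
          rw [Lf]
          calc K = Real.log (Real.exp K) := (Real.log_exp K).symm
            _ ≤ Real.log (q i j * mR f q (f i) / (mS q i * mT q j)) :=
              (Real.log_lt_log (Real.exp_pos K) hgt).le
        have := mul_le_mul_of_nonneg_left hKL h1.le
        linarith
      · rw [if_neg hbad]
        have := key_lb (f := f) hq i j h0
        linarith
  have h2 : (∑ i, ∑ j,
      ((if q i j ≠ 0 ∧ ¬ (q i j * mR f q (f i) ≤ Real.exp K * (mS q i * mT q j))
          then K * q i j else 0)
        - (if q i j ≠ 0 then mS q i * mT q j / mR f q (f i) else 0)))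
      ≤ ∑ i, ∑ j, q i j * Lf f q i j :=
    sum_le_sum fun i _ => sum_le_sum fun j _ => h i j
  have h3 : (∑ i, ∑ j,
      ((if q i j ≠ 0 ∧ ¬ (q i j * mR f q (f i) ≤ Real.exp K * (mS q i * mT q j))
          then K * q i j else 0)
        - (if q i j ≠ 0 then mS q i * mT q j / mR f q (f i) else 0)))
      = K * (∑ i, ∑ j, if q i j ≠ 0 ∧ ¬ (q i j * mR f q (f i) ≤ Real.exp K * (mS q i * mT q j))
          then q i j else 0)
        - (∑ i, ∑ j, if q i j ≠ 0 then mS q i * mT q j / mR f q (f i) else 0) := by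
    rw [Finset.mul_sum, ← Finset.sum_sub_distrib]
    refine sum_congr rfl fun i _ => ?_
    rw [Finset.mul_sum, ← Finset.sum_sub_distrib]
    refine sum_congr rfl fun j _ => ?_
    congr 1
    split <;> simp
  have h4 := sumb hq hsupp
  rw [h3] at h2
  linarith

lemma plog_add_le {a b : ℝ} (ha : 0 ≤ a) (hb : 0 ≤ b) : plog a + plog b ≤ plog (a + b) := by
  have h : ∀ x y : ℝ, 0 ≤ x → 0 ≤ y → plog x ≤ x * Real.log (x + y) := by
    intro x y hx hy
    rcases eq_or_lt_of_le hx with h | h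
    · simp [← h]
    · exact mul_le_mul_of_nonneg_left (Real.log_le_log h (by linarith)) hx
  have h1 := h a b ha hb
  have h2 := h b a hb ha
  have h3 : plog (a + b) = a * Real.log (a + b) + b * Real.log (a + b) := by
    rw [plog]; ring
  rw [add_comm b a] at h2
  linarith

lemma plog_add_lb {a b : ℝ} (ha : 0 ≤ a) (hb : 0 ≤ b) :
    plog (a + b) - (a + b) * Real.log 2 ≤ plog a + plog b := by
  have hlog2 : 0 ≤ Real.log 2 := Real.log_nonneg (by norm_num)
  rcases eq_or_lt_of_le ha with h | h
  · simp only [← h, zero_add, plog_zero]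
    nlinarith
  rcases eq_or_lt_of_le hb with h' | h'
  · simp only [← h', add_zero, plog_zero]
    nlinarith
  have hc : 0 < a + b := by linarith
  have key : ∀ x : ℝ, 0 < x → x ≤ a + b →
      x * Real.log (a + b) - x * Real.log 2 - plog x ≤ (a + b) / 2 - x := by
    intro x hx hxc
    have hpos : (0:ℝ) < (a + b) / (2 * x) := by positivity
    have hlog := Real.log_le_sub_one_of_pos hpos
    have h1 : x * Real.log ((a + b) / (2 * x)) ≤ x * ((a + b) / (2 * x) - 1) :=
      mul_le_mul_of_nonneg_left hlog hx.le
    have h2 : x * ((a + b) / (2 * x) - 1) = (a + b) / 2 - x := by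
      field_simp
    have h3 : Real.log ((a + b) / (2 * x)) = Real.log (a + b) - Real.log 2 - Real.log x := by
      rw [Real.log_div hc.ne' (by positivity), Real.log_mul (by norm_num) hx.ne']
      ring
    rw [h3] at h1
    rw [h2] at h1
    rw [plog]
    nlinarith
  have k1 := key a h (by linarith)
  have k2 := key b h' (by linarith)
  have h3 : plog (a + b) = (a + b) * Real.log (a + b) := rfl
  nlinarith

lemma Jsuper (hq : ∀ i j, 0 ≤ q i j) (hq' : ∀ i j, 0 ≤ q' i j) :
    Jfun f q + Jfun f q' ≤ Jfun f (fun i j => q i j + q' i j)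
      + ((∑ i, mS q i) + (∑ i, mS q' i)) * (2 * Real.log 2) := by
  have hmS : ∀ i, mS (fun i j => q i j + q' i j) i = mS q i + mS q' i := by
    intro i; unfold mS; rw [← sum_add_distrib]
  have hmT : ∀ j, mT (fun i j => q i j + q' i j) j = mT q j + mT q' j := by
    intro j; unfold mT; rw [← sum_add_distrib]
  have hmR : ∀ ρ, mR f (fun i j => q i j + q' i j) ρ = mR f q ρ + mR f q' ρ := by
    intro ρ; unfold mR; rw [← sum_add_distrib]
    refine sum_congr rfl fun i _ => ?_
    rw [hmS]
    split <;> simp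
  have hA : (∑ i, ∑ j, plog (q i j)) + (∑ i, ∑ j, plog (q' i j))
      ≤ ∑ i, ∑ j, plog (q i j + q' i j) := by
    rw [← Finset.sum_add_distrib]
    refine sum_le_sum fun i _ => ?_
    rw [← Finset.sum_add_distrib]
    exact sum_le_sum fun j _ => plog_add_le (hq i j) (hq' i j)
  have hRR : (∑ ρ, plog (mR f q ρ)) + (∑ ρ, plog (mR f q' ρ))
      ≤ ∑ ρ, plog (mR f q ρ + mR f q' ρ) := by
    rw [← Finset.sum_add_distrib]
    exact sum_le_sum fun ρ _ => plog_add_le (mR_nonneg hq ρ) (mR_nonneg hq' ρ)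
  have hSS : (∑ i, plog (mS q i + mS q' i))
      ≤ (∑ i, plog (mS q i)) + (∑ i, plog (mS q' i))
        + ((∑ i, mS q i) + (∑ i, mS q' i)) * Real.log 2 := by
    have e : ∑ i, (mS q i + mS q' i) * Real.log 2
        = ((∑ i, mS q i) + (∑ i, mS q' i)) * Real.log 2 := by
      rw [← Finset.sum_mul, Finset.sum_add_distrib]
    calc (∑ i, plog (mS q i + mS q' i))
        ≤ ∑ i, (plog (mS q i) + plog (mS q' i) + (mS q i + mS q' i) * Real.log 2) := by
          refine sum_le_sum fun i _ => ?_
          have := plog_add_lb (mS_nonneg hq i) (mS_nonneg hq' i)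
          linarith
      _ = (∑ i, plog (mS q i)) + (∑ i, plog (mS q' i))
            + ((∑ i, mS q i) + (∑ i, mS q' i)) * Real.log 2 := by
          rw [Finset.sum_add_distrib, Finset.sum_add_distrib, e]
  have hTT : (∑ j, plog (mT q j + mT q' j))
      ≤ (∑ j, plog (mT q j)) + (∑ j, plog (mT q' j))
        + ((∑ i, mS q i) + (∑ i, mS q' i)) * Real.log 2 := by
    have e : ∑ j, (mT q j + mT q' j) * Real.log 2
        = ((∑ i, mS q i) + (∑ i, mS q' i)) * Real.log 2 := by
      rw [← Finset.sum_mul, Finset.sum_add_distrib, tot_eq, tot_eq]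
    calc (∑ j, plog (mT q j + mT q' j))
        ≤ ∑ j, (plog (mT q j) + plog (mT q' j) + (mT q j + mT q' j) * Real.log 2) := by
          refine sum_le_sum fun j _ => ?_
          have := plog_add_lb (mT_nonneg hq j) (mT_nonneg hq' j)
          linarith
      _ = (∑ j, plog (mT q j)) + (∑ j, plog (mT q' j))
            + ((∑ i, mS q i) + (∑ i, mS q' i)) * Real.log 2 := by
          rw [Finset.sum_add_distrib, Finset.sum_add_distrib, e]
  simp only [Jfun, hmS, hmT, hmR]
  linarith

lemma greedy {ι κ : Type*} [Fintype ι] [Fintype κ]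
    (u : ι → ℝ) (hu : ∀ i, 0 ≤ u i) (w : κ → ℝ) (hw : ∀ j, 0 ≤ w j)
    (N : κ → ι → Prop) (G : Finset κ) {θ : ℝ} (hθ0 : 0 < θ) (hθ1 : θ ≤ 1)
    (hgood : ∀ j ∈ G, θ * (∑ i, u i) ≤ ∑ i, if N j i then u i else 0)
    (hwW : ∀ j ∈ G, w j ≤ ∑ i, u i) :
    ∀ M : ℕ, ∃ A : Finset ι, A.card ≤ M ∧
      (∑ j ∈ G, if ∀ i ∈ A, ¬ N j i then w j else 0) ≤ (1 - θ) ^ M * ∑ j ∈ G, w j := by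
  have h1θ : 0 ≤ 1 - θ := by linarith
  have hGw : (0:ℝ) ≤ ∑ j ∈ G, w j := sum_nonneg fun j _ => hw j
  intro M
  induction M with
  | zero =>
    refine ⟨∅, le_rfl, ?_⟩
    rw [pow_zero, one_mul]
    refine sum_le_sum fun j hj => ?_
    split
    · exact le_rfl
    · exact hw j
  | succ M ih =>
    obtain ⟨A, hcard, hbound⟩ := ih
    set unc : ℝ := ∑ j ∈ G, if ∀ i ∈ A, ¬ N j i then w j else 0 with huncdef
    by_cases h0 : unc ≤ 0
    · refine ⟨A, hcard.trans (Nat.le_succ M), h0.trans ?_⟩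
      exact mul_nonneg (pow_nonneg h1θ _) hGw
    push_neg at h0
    set W : ℝ := ∑ i, u i with hWdef
    have hWpos : 0 < W := by
      rcases lt_or_ge 0 W with h | h
      · exact h
      · exfalso
        have hzz : unc ≤ 0 := by
          rw [huncdef]
          refine sum_nonpos fun j hj => ?_
          split
          · exact le_trans (hwW j hj) h
          · exact le_rfl
        linarith
    set cov : ι → ℝ := fun i => ∑ j ∈ G, if (∀ i' ∈ A, ¬ N j i') ∧ N j i then w j else 0
      with hcovdef
    have hex : ∃ i, θ * unc ≤ cov i := by
      by_contra hcon
      push_neg at hcon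
      have e : ∑ i, u i * cov i
          = ∑ j ∈ G, (if ∀ i' ∈ A, ¬ N j i' then w j * (∑ i, if N j i then u i else 0) else 0) := by
        have e1 : ∀ i, u i * cov i
            = ∑ j ∈ G, (if (∀ i' ∈ A, ¬ N j i') ∧ N j i then u i * w j else 0) := by
          intro i
          rw [hcovdef, Finset.mul_sum]
          exact sum_congr rfl fun j _ => by split <;> simp
        rw [sum_congr rfl fun i _ => e1 i, Finset.sum_comm]
        refine sum_congr rfl fun j _ => ?_
        by_cases hP : ∀ i' ∈ A, ¬ N j i'
        · rw [if_pos hP, Finset.mul_sum]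
          refine sum_congr rfl fun i _ => ?_
          by_cases hN : N j i
          · rw [if_pos ⟨hP, hN⟩, if_pos hN]; ring
          · rw [if_neg (by tauto), if_neg hN, mul_zero]
        · rw [if_neg hP]
          refine (Finset.sum_eq_zero fun i _ => ?_)
          rw [if_neg (by tauto)]
      have hlb : θ * W * unc ≤ ∑ i, u i * cov i := by
        rw [e]
        have e2 : θ * W * unc = ∑ j ∈ G, (if ∀ i' ∈ A, ¬ N j i' then θ * W * w j else 0) := by
          rw [huncdef, Finset.mul_sum]
          exact sum_congr rfl fun j _ => by split <;> simp
        rw [e2]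
        refine sum_le_sum fun j hj => ?_
        by_cases hP : ∀ i' ∈ A, ¬ N j i'
        · rw [if_pos hP, if_pos hP]
          calc θ * W * w j = w j * (θ * W) := by ring
            _ ≤ w j * ∑ i, if N j i then u i else 0 :=
              mul_le_mul_of_nonneg_left (hgood j hj) (hw j)
        · rw [if_neg hP, if_neg hP]
      have hub : ∑ i, u i * cov i < ∑ i, u i * (θ * unc) := by
        obtain ⟨i0, hu0⟩ : ∃ i, 0 < u i := by
          by_contra hc
          push_neg at hc
          have : W ≤ 0 := sum_nonpos fun i _ => hc i
          linarith
        refine Finset.sum_lt_sum (fun i _ => mul_le_mul_of_nonneg_left (hcon i).le (hu i))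
          ⟨i0, mem_univ i0, mul_lt_mul_of_pos_left (hcon i0) hu0⟩
      have heq : ∑ i, u i * (θ * unc) = θ * W * unc := by
        rw [← Finset.sum_mul]
        ring
      rw [heq] at hub
      linarith
    obtain ⟨i0, hi0⟩ := hex
    refine ⟨insert i0 A, (card_insert_le _ _).trans (Nat.succ_le_succ hcard), ?_⟩
    have hsplit : (∑ j ∈ G, if ∀ i ∈ insert i0 A, ¬ N j i then w j else 0)
        = unc - cov i0 := by
      rw [huncdef, hcovdef, ← Finset.sum_sub_distrib]
      refine sum_congr rfl fun j _ => ?_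
      by_cases hP : ∀ i' ∈ A, ¬ N j i' <;> by_cases hN : N j i0 <;>
        simp [Finset.forall_mem_insert, hP, hN]
    rw [hsplit]
    calc unc - cov i0 ≤ (1 - θ) * unc := by linarith
      _ ≤ (1 - θ) * ((1 - θ) ^ M * ∑ j ∈ G, w j) := mul_le_mul_of_nonneg_left hbound h1θ
      _ = (1 - θ) ^ (M + 1) * ∑ j ∈ G, w j := by ring

end Abstract

section Measure

open MeasureTheory

variable {X : Type*} [MeasurableSpace X]
variable {F : Type*} [Fintype F] [MeasurableSpace F] [MeasurableSingletonClass F]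

lemma meas_part' (μ : Measure X) [IsFiniteMeasure μ] (φ : X → F) (hφ : Measurable φ) (A : Set X) (hA : MeasurableSet A)
    (s : Finset F) :
    ∑ k ∈ s, (μ (A ∩ φ ⁻¹' {k})).toReal = (μ (A ∩ φ ⁻¹' ↑s)).toReal := by
  rw [← ENNReal.toReal_sum (fun a _ => measure_ne_top μ _)]
  congr 1
  have hU : A ∩ φ ⁻¹' ↑s = ⋃ k ∈ s, A ∩ φ ⁻¹' {k} := by
    ext x
    simp only [Set.mem_inter_iff, Set.mem_preimage, Finset.coe_sort_coe, Set.mem_iUnion,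
      Set.mem_singleton_iff, Finset.mem_coe]
    constructor
    · rintro ⟨hxA, hxs⟩
      exact ⟨φ x, hxs, hxA, rfl⟩
    · rintro ⟨k, hk, hxA, hk'⟩
      exact ⟨hxA, hk' ▸ hk⟩
  rw [hU, measure_biUnion_finset ?_ ?_]
  · intro k _ k' _ hkk
    refine Set.disjoint_left.2 fun x hx hx' => hkk ?_
    have h1 : φ x = k := hx.2
    have h2 : φ x = k' := hx'.2
    rw [← h1, h2]
  · intro k _
    exact hA.inter (hφ (measurableSet_singleton k))

lemma meas_part (μ : Measure X) [IsFiniteMeasure μ] (φ : X → F) (hφ : Measurable φ)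
    (A : Set X) (hA : MeasurableSet A) :
    ∑ k : F, (μ (A ∩ φ ⁻¹' {k})).toReal = (μ A).toReal := by
  have := meas_part' μ φ hφ A hA Finset.univ
  simpa using this

end Measure

end EffCov

open EffCov

set_option maxHeartbeats 1000000 in
/-- **Efficient covering from a conditional mutual-information bound.** -/
theorem efficient_cov_from_cond_mutual_info.{u, v, w, z} :
    ∀ α η : ℝ, 0 < α → α ≤ 1 → 0 < η → η < α →
    ∃ C : ℝ,
      ∀ (X : Type u) (S : Type v) (T : Type w) (R : Type z)
        [MeasurableSpace X] [Fintype S] [MeasurableSpace S] [MeasurableSingletonClass S]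
        [Fintype T] [MeasurableSpace T] [MeasurableSingletonClass T]
        [Fintype R] [MeasurableSpace R] [MeasurableSingletonClass R]
        (μ : Measure X), IsProbabilityMeasure μ →
      ∀ (s : X → S) (t : X → T) (r : X → R),
        Measurable s → Measurable t → Measurable r →
        (∃ f : S → R, r = f ∘ s) → (∃ g : T → R, r = g ∘ t) →
      ∀ U : Set X, MeasurableSet U → ENNReal.ofReal α ≤ μ U →
        ∃ S₀ : Finset X, ↑S₀ ⊆ U ∧
          (S₀.card : ℝ) ≤ (Fintype.card R : ℝ)
              * Real.exp (C * (finCondMutualInfo μ s t r + 1)) ∧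
          (μ U).toReal - η <
            (μ (U ∩ {x | ∃ w ∈ U, t x = t w ∧ ∃ z ∈ S₀, s w = s z})).toReal := by
  intro α η hα0 hα1 hη0 hηα
  classical
  have hη1 : η < 1 := lt_of_lt_of_le hηα hα1
  have h4η : (1:ℝ) < 4 / η := by rw [lt_div_iff₀ hη0]; linarith
  have hL0 : 0 < Real.log (4 / η) := Real.log_pos h4η
  set c0 : ℝ := 2 * Real.log (4 / η) + 1 with hc0def
  have hc01 : 1 ≤ c0 := by rw [hc0def]; linarith
  have hlogc0 : 0 ≤ Real.log c0 := Real.log_nonneg hc01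
  refine ⟨Real.log c0 + 16 / η, ?_⟩
  intro X S T R mX ftS mbS msS ftT mbT msT ftR mbR msR μ hprob s t r hs ht hr hfe hge U hUm hUα
  obtain ⟨f, hf⟩ := hfe
  obtain ⟨g, hg⟩ := hge
  have hfp : ∀ x, r x = f (s x) := fun x => congrFun hf x
  have hgp : ∀ x, r x = g (t x) := fun x => congrFun hg x
  set I := finCondMutualInfo μ s t r with hIdef
  have hmsi : ∀ i : S, MeasurableSet (s ⁻¹' {i}) := fun i => hs (measurableSet_singleton i)
  have hmtj : ∀ j : T, MeasurableSet (t ⁻¹' {j}) := fun j => ht (measurableSet_singleton j)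
  have hmij : ∀ (i : S) (j : T), MeasurableSet (s ⁻¹' {i} ∩ t ⁻¹' {j}) :=
    fun i j => (hmsi i).inter (hmtj j)
  set P : S → T → ℝ := fun i j => (μ (s ⁻¹' {i} ∩ t ⁻¹' {j})).toReal with hPdef
  set Q : S → T → ℝ := fun i j => (μ (U ∩ (s ⁻¹' {i} ∩ t ⁻¹' {j}))).toReal with hQdef
  set Q2 : S → T → ℝ := fun i j => (μ (Uᶜ ∩ (s ⁻¹' {i} ∩ t ⁻¹' {j}))).toReal with hQ2def
  have hP0 : ∀ i j, 0 ≤ P i j := fun i j => ENNReal.toReal_nonneg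
  have hQ0 : ∀ i j, 0 ≤ Q i j := fun i j => ENNReal.toReal_nonneg
  have hQ20 : ∀ i j, 0 ≤ Q2 i j := fun i j => ENNReal.toReal_nonneg
  have hPadd : ∀ i j, P i j = Q i j + Q2 i j := by
    intro i j
    simp only [hPdef, hQdef, hQ2def]
    have h1 : μ (s ⁻¹' {i} ∩ t ⁻¹' {j})
        = μ (U ∩ (s ⁻¹' {i} ∩ t ⁻¹' {j})) + μ (Uᶜ ∩ (s ⁻¹' {i} ∩ t ⁻¹' {j})) := by
      rw [Set.inter_comm U, Set.inter_comm Uᶜ, ← Set.diff_eq]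
      exact (measure_inter_add_diff _ hUm).symm
    rw [h1, ENNReal.toReal_add (measure_ne_top μ _) (measure_ne_top μ _)]
  -- support
  have hsupp_gen : ∀ (V : Set X) (i : S) (j : T),
      (μ (V ∩ (s ⁻¹' {i} ∩ t ⁻¹' {j}))).toReal ≠ 0 → f i = g j := by
    intro V i j hne
    have hμ : μ (V ∩ (s ⁻¹' {i} ∩ t ⁻¹' {j})) ≠ 0 := by
      intro h0
      exact hne (by rw [h0, ENNReal.toReal_zero])
    obtain ⟨x, -, hxs, hxt⟩ := nonempty_of_measure_ne_zero hμ
    have hsx : s x = i := hxs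
    have htx : t x = j := hxt
    calc f i = f (s x) := by rw [hsx]
      _ = r x := (hfp x).symm
      _ = g (t x) := hgp x
      _ = g j := by rw [htx]
  have hsuppP : ∀ i j, P i j ≠ 0 → f i = g j := by
    intro i j h
    refine hsupp_gen Set.univ i j ?_
    simpa only [Set.univ_inter] using h
  have hsuppQ : ∀ i j, Q i j ≠ 0 → f i = g j := fun i j h => hsupp_gen U i j h
  have hsuppQ2 : ∀ i j, Q2 i j ≠ 0 → f i = g j := fun i j h => hsupp_gen Uᶜ i j h
  -- marginals
  have hmSP : ∀ i, mS P i = (μ (s ⁻¹' {i})).toReal := by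
    intro i
    have h := meas_part μ t ht (s ⁻¹' {i}) (hmsi i)
    simpa only [mS, hPdef] using h
  have hmSQ : ∀ i, mS Q i = (μ (U ∩ s ⁻¹' {i})).toReal := by
    intro i
    have h := meas_part μ t ht (U ∩ s ⁻¹' {i}) (hUm.inter (hmsi i))
    simp only [Set.inter_assoc] at h
    simpa only [mS, hQdef] using h
  have hsetc : ∀ (i : S) (j : T), (U ∩ t ⁻¹' {j}) ∩ s ⁻¹' {i} = U ∩ (s ⁻¹' {i} ∩ t ⁻¹' {j}) := by
    intro i j; ext x; simp only [Set.mem_inter_iff, Set.mem_preimage]; tauto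
  have hmTQ : ∀ j, mT Q j = (μ (U ∩ t ⁻¹' {j})).toReal := by
    intro j
    have h := meas_part μ s hs (U ∩ t ⁻¹' {j}) (hUm.inter (hmtj j))
    simp only [hsetc] at h
    simpa only [mT, hQdef] using h
  have htotQ : ∑ i, mS Q i = (μ U).toReal := by
    have h := meas_part μ s hs U hUm
    rw [Finset.sum_congr rfl fun i _ => hmSQ i]
    exact h
  have htotT : ∑ j, mT Q j = (μ U).toReal := by
    have h := meas_part μ t ht U hUm
    rw [Finset.sum_congr rfl fun j _ => hmTQ j]
    exact h
  have htotP : ∑ i, mS P i = 1 := by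
    have h := meas_part μ s hs Set.univ MeasurableSet.univ
    simp only [Set.univ_inter] at h
    rw [Finset.sum_congr rfl fun i _ => hmSP i, h, measure_univ, ENNReal.toReal_one]
  have hμU1 : (μ U).toReal ≤ 1 := by
    have := prob_le_one (μ := μ) (s := U)
    calc (μ U).toReal ≤ (1 : ENNReal).toReal := ENNReal.toReal_mono ENNReal.one_ne_top this
      _ = 1 := ENNReal.toReal_one
  have htotQle : ∑ i, mS Q i ≤ 1 := by rw [htotQ]; exact hμU1
  -- r-fiber set identities
  have hsetRS : ∀ (ρ : R) (i : S),
      r ⁻¹' {ρ} ∩ s ⁻¹' {i} = if f i = ρ then s ⁻¹' {i} else (∅ : Set X) := by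
    intro ρ i
    ext x
    simp only [Set.mem_inter_iff, Set.mem_preimage, Set.mem_singleton_iff]
    by_cases h : f i = ρ
    · rw [if_pos h]
      simp only [Set.mem_preimage, Set.mem_singleton_iff]
      exact ⟨fun hx => hx.2, fun hx => ⟨by rw [hfp x, hx, h], hx⟩⟩
    · rw [if_neg h]
      simp only [Set.mem_empty_iff_false, iff_false, not_and]
      intro h1 h2
      exact h (by rw [← h2, ← hfp x]; exact h1)
  have hsetSR : ∀ (i : S) (ρ : R),
      s ⁻¹' {i} ∩ r ⁻¹' {ρ} = if f i = ρ then s ⁻¹' {i} else (∅ : Set X) := by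
    intro i ρ; rw [Set.inter_comm]; exact hsetRS ρ i
  have hsetTR : ∀ (j : T) (ρ : R),
      t ⁻¹' {j} ∩ r ⁻¹' {ρ} = if g j = ρ then t ⁻¹' {j} else (∅ : Set X) := by
    intro j ρ
    ext x
    simp only [Set.mem_inter_iff, Set.mem_preimage, Set.mem_singleton_iff]
    by_cases h : g j = ρ
    · rw [if_pos h]
      simp only [Set.mem_preimage, Set.mem_singleton_iff]
      exact ⟨fun hx => hx.1, fun hx => ⟨hx, by rw [hgp x, hx, h]⟩⟩
    · rw [if_neg h]
      simp only [Set.mem_empty_iff_false, iff_false, not_and]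
      intro h1 h2
      exact h (by rw [← h1, ← hgp x]; exact h2)
  have hsetSTR : ∀ (i : S) (j : T) (ρ : R),
      (s ⁻¹' {i} ∩ t ⁻¹' {j}) ∩ r ⁻¹' {ρ}
        = if f i = ρ then s ⁻¹' {i} ∩ t ⁻¹' {j} else (∅ : Set X) := by
    intro i j ρ
    ext x
    simp only [Set.mem_inter_iff, Set.mem_preimage, Set.mem_singleton_iff]
    by_cases h : f i = ρ
    · rw [if_pos h]
      simp only [Set.mem_inter_iff, Set.mem_preimage, Set.mem_singleton_iff]
      exact ⟨fun hx => hx.1, fun hx => ⟨hx, by rw [hfp x, hx.1, h]⟩⟩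
    · rw [if_neg h]
      simp only [Set.mem_empty_iff_false, iff_false, not_and]
      rintro ⟨h1, h2⟩ h3
      exact h (by rw [← h1, ← hfp x]; exact h3)
  have hmRP : ∀ ρ, mR f P ρ = (μ (r ⁻¹' {ρ})).toReal := by
    intro ρ
    have h := meas_part μ s hs (r ⁻¹' {ρ}) (hr (measurableSet_singleton ρ))
    rw [← h]
    unfold mR
    refine Finset.sum_congr rfl fun i _ => ?_
    rw [hsetRS ρ i]
    by_cases hfi : f i = ρ
    · rw [if_pos hfi, if_pos hfi, hmSP i]
    · rw [if_neg hfi, if_neg hfi]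
      simp
  -- entropy identity
  have hnml : ∀ x : ℝ, Real.negMulLog x = - plog x := by
    intro x; simp [Real.negMulLog, plog]
  have hH1 : finEntropy μ (fun x => (s x, r x)) = ∑ i, Real.negMulLog (mS P i) := by
    rw [finEntropy, Fintype.sum_prod_type]
    refine Finset.sum_congr rfl fun i _ => ?_
    have hpre : ∀ ρ : R, (fun x => (s x, r x)) ⁻¹' {(i, ρ)} = s ⁻¹' {i} ∩ r ⁻¹' {ρ} := by
      intro ρ; ext x; simp [Prod.ext_iff]
    calc (∑ ρ, Real.negMulLog ((μ ((fun x => (s x, r x)) ⁻¹' {(i, ρ)})).toReal))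
        = ∑ ρ, (if f i = ρ then Real.negMulLog ((μ (s ⁻¹' {i})).toReal) else 0) := by
          refine Finset.sum_congr rfl fun ρ _ => ?_
          rw [hpre ρ, hsetSR i ρ]
          split
          · rfl
          · simp
      _ = Real.negMulLog ((μ (s ⁻¹' {i})).toReal) := by rw [Finset.sum_ite_eq]; simp
      _ = Real.negMulLog (mS P i) := by rw [hmSP i]
  have hH2 : finEntropy μ (fun x => (t x, r x)) = ∑ j, Real.negMulLog (mT P j) := by
    rw [finEntropy, Fintype.sum_prod_type]
    refine Finset.sum_congr rfl fun j _ => ?_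
    have hpre : ∀ ρ : R, (fun x => (t x, r x)) ⁻¹' {(j, ρ)} = t ⁻¹' {j} ∩ r ⁻¹' {ρ} := by
      intro ρ; ext x; simp [Prod.ext_iff]
    have hmTP : mT P j = (μ (t ⁻¹' {j})).toReal := by
      have h := meas_part μ s hs (t ⁻¹' {j}) (hmtj j)
      have hsetc2 : ∀ i : S, t ⁻¹' {j} ∩ s ⁻¹' {i} = s ⁻¹' {i} ∩ t ⁻¹' {j} := fun i =>
        Set.inter_comm _ _
      simp only [hsetc2] at h
      simpa only [mT, hPdef] using h
    calc (∑ ρ, Real.negMulLog ((μ ((fun x => (t x, r x)) ⁻¹' {(j, ρ)})).toReal))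
        = ∑ ρ, (if g j = ρ then Real.negMulLog ((μ (t ⁻¹' {j})).toReal) else 0) := by
          refine Finset.sum_congr rfl fun ρ _ => ?_
          rw [hpre ρ, hsetTR j ρ]
          split
          · rfl
          · simp
      _ = Real.negMulLog ((μ (t ⁻¹' {j})).toReal) := by rw [Finset.sum_ite_eq]; simp
      _ = Real.negMulLog (mT P j) := by rw [hmTP]
  have hH3 : finEntropy μ (fun x => (s x, t x, r x)) = ∑ i, ∑ j, Real.negMulLog (P i j) := by
    rw [finEntropy, Fintype.sum_prod_type]
    refine Finset.sum_congr rfl fun i _ => ?_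
    rw [Fintype.sum_prod_type]
    refine Finset.sum_congr rfl fun j _ => ?_
    have hpre : ∀ ρ : R, (fun x => (s x, t x, r x)) ⁻¹' {(i, j, ρ)}
        = (s ⁻¹' {i} ∩ t ⁻¹' {j}) ∩ r ⁻¹' {ρ} := by
      intro ρ; ext x; simp [Prod.ext_iff, and_assoc]
    calc (∑ ρ, Real.negMulLog ((μ ((fun x => (s x, t x, r x)) ⁻¹' {(i, j, ρ)})).toReal))
        = ∑ ρ, (if f i = ρ then Real.negMulLog ((μ (s ⁻¹' {i} ∩ t ⁻¹' {j})).toReal) else 0) := by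
          refine Finset.sum_congr rfl fun ρ _ => ?_
          rw [hpre ρ, hsetSTR i j ρ]
          split
          · rfl
          · simp
      _ = Real.negMulLog ((μ (s ⁻¹' {i} ∩ t ⁻¹' {j})).toReal) := by rw [Finset.sum_ite_eq]; simp
      _ = Real.negMulLog (P i j) := rfl
  have hH4 : finEntropy μ r = ∑ ρ, Real.negMulLog (mR f P ρ) := by
    rw [finEntropy]
    exact Finset.sum_congr rfl fun ρ _ => by rw [hmRP ρ]
  have hIJ : I = Jfun f P := by
    rw [hIdef, finCondMutualInfo, hH1, hH2, hH3, hH4, Jfun]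
    simp only [hnml, Finset.sum_neg_distrib]
    ring
  have hI0 : 0 ≤ I := by rw [hIJ]; exact gibbs hP0 hsuppP
  have hlog2 : Real.log 2 ≤ 1 := by
    have := Real.log_le_sub_one_of_pos (by norm_num : (0:ℝ) < 2); linarith
  have hlog2' : 0 ≤ Real.log 2 := Real.log_nonneg (by norm_num)
  have htotQ2 : (∑ i, mS Q i) + (∑ i, mS Q2 i) = 1 := by
    rw [← htotP, ← Finset.sum_add_distrib]
    refine Finset.sum_congr rfl fun i _ => ?_
    unfold mS
    rw [← Finset.sum_add_distrib]
    exact Finset.sum_congr rfl fun j _ => (hPadd i j).symm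
  have hJQ : Jfun f Q ≤ I + 2 := by
    have hsup := Jsuper (f := f) hQ0 hQ20
    have hPe : (fun i j => Q i j + Q2 i j) = P := by
      funext i j; rw [hPadd]
    rw [hPe, htotQ2] at hsup
    have hg2 := gibbs hQ20 hsuppQ2
    rw [hIJ]
    nlinarith [hsup, hg2]
  -- parameters
  set K : ℝ := 8 * (I + 2) / η with hKdef
  have hK0 : 0 < K := by
    rw [hKdef]
    apply div_pos ?_ hη0
    nlinarith [hI0]
  set θ : ℝ := Real.exp (-K) / 2 with hθdef
  have hθ0 : 0 < θ := by rw [hθdef]; positivity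
  have hθ1 : θ ≤ 1 := by
    rw [hθdef]
    have h1 : Real.exp (-K) ≤ 1 := Real.exp_le_one_iff.2 (by linarith)
    linarith
  set M : ℕ := ⌈Real.log (4 / η) / θ⌉₊ with hMdef
  set gm : T → ℝ := fun j => ∑ i, if (Q i j ≠ 0 ∧ Q i j * mR f Q (f i) ≤ Real.exp K * (mS Q i * mT Q j)) then Q i j else 0 with hgmdef
  set bm : T → ℝ := fun j => ∑ i, if (Q i j ≠ 0 ∧ ¬ (Q i j * mR f Q (f i) ≤ Real.exp K * (mS Q i * mT Q j))) then Q i j else 0 with hbmdef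
  have hgm0 : ∀ j, 0 ≤ gm j := by
    intro j
    simp only [hgmdef]
    refine Finset.sum_nonneg fun i _ => ?_
    split
    · exact hQ0 i j
    · exact le_rfl
  have hbm0 : ∀ j, 0 ≤ bm j := by
    intro j
    simp only [hbmdef]
    refine Finset.sum_nonneg fun i _ => ?_
    split
    · exact hQ0 i j
    · exact le_rfl
  set GFin : R → Finset T := fun ρ =>
    Finset.univ.filter (fun j => g j = ρ ∧ mT Q j ≠ 0 ∧ mT Q j ≤ 2 * gm j) with hGFdef
  have hgreedy : ∀ ρ : R, ∃ A : Finset S, A.card ≤ M ∧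
      (∑ j ∈ GFin ρ, if ∀ i ∈ A, ¬ (Q i j ≠ 0) then mT Q j else 0)
        ≤ (1 - θ) ^ M * ∑ j ∈ GFin ρ, mT Q j := by
    intro ρ
    have hu : ∀ i : S, 0 ≤ (if f i = ρ then mS Q i else 0) := by
      intro i
      split
      · exact mS_nonneg hQ0 i
      · exact le_rfl
    have hgood : ∀ j ∈ GFin ρ, θ * (∑ i, if f i = ρ then mS Q i else 0)
        ≤ ∑ i, @ite ℝ (Q i j ≠ 0) (Classical.propDecidable _) (if f i = ρ then mS Q i else 0) 0 := by
      intro j hj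
      simp only [hGFdef, Finset.mem_filter] at hj
      obtain ⟨-, hgj, hmTne, hhalf⟩ := hj
      have hmTpos : 0 < mT Q j := lt_of_le_of_ne (mT_nonneg hQ0 j) (Ne.symm hmTne)
      have hWeq : (∑ i, if f i = ρ then mS Q i else 0) = mR f Q ρ := rfl
      rw [hWeq]
      have hc0' : 0 ≤ mR f Q ρ / (Real.exp K * mT Q j) :=
        div_nonneg (mR_nonneg hQ0 ρ) (by positivity)
      have step1 : gm j * (mR f Q ρ / (Real.exp K * mT Q j))
          ≤ ∑ i, @ite ℝ (Q i j ≠ 0) (Classical.propDecidable _) (if f i = ρ then mS Q i else 0) 0 := by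
        simp only [hgmdef]
        rw [Finset.sum_mul]
        refine Finset.sum_le_sum fun i _ => ?_
        by_cases hgp2 : (Q i j ≠ 0 ∧ Q i j * mR f Q (f i) ≤ Real.exp K * (mS Q i * mT Q j))
        · have hfi : f i = ρ := by rw [hsuppQ i j hgp2.1, hgj]
          rw [if_pos hgp2, if_pos hgp2.1, if_pos hfi]
          have hpos : 0 < Real.exp K * mT Q j := by positivity
          rw [mul_div_assoc', div_le_iff₀ hpos]
          have h2 := hgp2.2
          rw [hfi] at h2
          calc Q i j * mR f Q ρ ≤ Real.exp K * (mS Q i * mT Q j) := h2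
            _ = mS Q i * (Real.exp K * mT Q j) := by ring
        · rw [if_neg hgp2, zero_mul]
          by_cases h1 : Q i j ≠ 0
          · rw [if_pos h1]
            split
            · exact mS_nonneg hQ0 i
            · exact le_rfl
          · rw [if_neg h1]
      have step2 : θ * mR f Q ρ ≤ gm j * (mR f Q ρ / (Real.exp K * mT Q j)) := by
        have e : (mT Q j / 2) * (mR f Q ρ / (Real.exp K * mT Q j)) = θ * mR f Q ρ := by
          rw [hθdef, Real.exp_neg]
          field_simp
        rw [← e]
        refine mul_le_mul_of_nonneg_right ?_ hc0'
        linarith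
      exact le_trans step2 step1
    have hwW : ∀ j ∈ GFin ρ, mT Q j ≤ ∑ i, if f i = ρ then mS Q i else 0 := by
      intro j hj
      simp only [hGFdef, Finset.mem_filter] at hj
      obtain ⟨-, hgj, -, -⟩ := hj
      have hWeq : (∑ i, if f i = ρ then mS Q i else 0) = mR f Q ρ := rfl
      rw [hWeq, mR_eq_T hsuppQ ρ]
      have h := Finset.single_le_sum (f := fun j' => if g j' = ρ then mT Q j' else 0)
        (fun j' _ => by split; exacts [mT_nonneg hQ0 j', le_rfl]) (Finset.mem_univ j)
      simpa [hgj] using h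
    obtain ⟨A, h1, h2⟩ := greedy (fun i => if f i = ρ then mS Q i else 0) hu (mT Q)
      (fun j => mT_nonneg hQ0 j) (fun j i => Q i j ≠ 0) (GFin ρ) hθ0 hθ1 hgood hwW M
    refine ⟨A, h1, ?_⟩
    convert h2 using 2
    rename_i j _
    by_cases hc : ∀ i ∈ A, ¬ Q i j ≠ 0
    · rw [if_pos hc, if_pos hc]
    · rw [if_neg hc, if_neg hc]
  choose Afam hAcard hAunc using hgreedy
  set A : Finset S := Finset.univ.biUnion Afam with hAdef
  set A' : Finset S := A.filter (fun i => mS Q i ≠ 0) with hA'def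
  have hne : ∀ i, mS Q i ≠ 0 → (U ∩ s ⁻¹' {i}).Nonempty := by
    intro i hi
    refine nonempty_of_measure_ne_zero (μ := μ) ?_
    intro h0
    exact hi (by rw [hmSQ i, h0, ENNReal.toReal_zero])
  set pick : S → Finset X := fun i =>
    if h : (U ∩ s ⁻¹' {i}).Nonempty then {h.choose} else ∅ with hpickdef
  set S₀ : Finset X := A'.biUnion pick with hS₀def
  have hpickmem : ∀ i, mS Q i ≠ 0 → ∃ z ∈ pick i, z ∈ U ∧ s z = i := by
    intro i hi
    have h := hne i hi
    refine ⟨h.choose, ?_, h.choose_spec.1, h.choose_spec.2⟩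
    simp only [hpickdef, dif_pos h]
    exact Finset.mem_singleton_self _
  have hS₀U : ↑S₀ ⊆ U := by
    intro x hx
    simp only [hS₀def, Finset.coe_biUnion, Set.mem_iUnion, Finset.mem_coe] at hx
    obtain ⟨i, _, hxp⟩ := hx
    simp only [hpickdef] at hxp
    by_cases h : (U ∩ s ⁻¹' {i}).Nonempty
    · rw [dif_pos h, Finset.mem_singleton] at hxp
      rw [hxp]
      exact h.choose_spec.1
    · rw [dif_neg h] at hxp
      exact absurd hxp (Finset.notMem_empty x)
  have hpickcard : ∀ i, (pick i).card ≤ 1 := by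
    intro i
    simp only [hpickdef]
    split
    · exact le_of_eq (Finset.card_singleton _)
    · simp
  have hS₀card : S₀.card ≤ A'.card := by
    rw [hS₀def]
    refine Finset.card_biUnion_le.trans ?_
    calc ∑ i ∈ A', (pick i).card ≤ ∑ i ∈ A', 1 := Finset.sum_le_sum fun i _ => hpickcard i
      _ = A'.card := by simp
  have hAcardR : A.card ≤ Fintype.card R * M := by
    rw [hAdef]
    refine Finset.card_biUnion_le.trans ?_
    calc ∑ ρ : R, (Afam ρ).card ≤ ∑ _ρ : R, M := Finset.sum_le_sum fun ρ _ => hAcard ρ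
      _ = Fintype.card R * M := by rw [Finset.sum_const, smul_eq_mul, Finset.card_univ]
  set Cov : Finset T := Finset.univ.filter (fun j => ∃ i ∈ A', Q i j ≠ 0) with hCovdef
  have hzc : ∀ i ∈ A', ∃ z ∈ S₀, s z = i := by
    intro i hi
    have hi' := hi
    rw [hA'def, Finset.mem_filter] at hi'
    obtain ⟨z, hz, _, hzs⟩ := hpickmem i hi'.2
    refine ⟨z, ?_, hzs⟩
    rw [hS₀def]
    exact Finset.mem_biUnion.2 ⟨i, hi, hz⟩
  have hsub : U ∩ t ⁻¹' (↑Cov) ⊆ U ∩ {x | ∃ w ∈ U, t x = t w ∧ ∃ z ∈ S₀, s w = s z} := by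
    rintro x ⟨hxU, hxt⟩
    refine ⟨hxU, ?_⟩
    rw [Set.mem_preimage, Finset.mem_coe, hCovdef, Finset.mem_filter] at hxt
    obtain ⟨-, i, hiA', hQne⟩ := hxt
    have hμ : μ (U ∩ (s ⁻¹' {i} ∩ t ⁻¹' {t x})) ≠ 0 := by
      intro h0
      exact hQne (by simp only [hQdef]; rw [h0, ENNReal.toReal_zero])
    obtain ⟨w, hwU, hws, hwt⟩ := nonempty_of_measure_ne_zero hμ
    obtain ⟨z, hzS₀, hzs⟩ := hzc i hiA'
    have hws' : s w = i := hws
    have hwt' : t w = t x := hwt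
    exact ⟨w, hwU, hwt'.symm, z, hzS₀, by rw [hws', hzs]⟩
  -- cardinality bound
  have hIK : K ≤ 16 / η * (I + 1) := by
    rw [hKdef, div_mul_eq_mul_div]
    rw [div_le_div_iff₀ hη0 hη0]
    nlinarith [hI0, hη0]
  have hMle : (M:ℝ) ≤ Real.exp ((Real.log c0 + 16 / η) * (I + 1)) := by
    have h1 : (M:ℝ) < Real.log (4 / η) / θ + 1 := by
      rw [hMdef]
      exact Nat.ceil_lt_add_one (by positivity)
    have h2 : Real.log (4 / η) / θ = 2 * Real.log (4 / η) * Real.exp K := by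
      rw [hθdef, Real.exp_neg]
      field_simp
    rw [h2] at h1
    have hexp1 : 1 ≤ Real.exp K := Real.one_le_exp hK0.le
    have h3 : (M:ℝ) ≤ c0 * Real.exp K := by
      rw [hc0def]
      nlinarith [h1, hexp1, hL0]
    have h4 : c0 * Real.exp K = Real.exp (Real.log c0 + K) := by
      rw [Real.exp_add, Real.exp_log (by linarith)]
    have h5 : Real.log c0 + K ≤ (Real.log c0 + 16 / η) * (I + 1) := by
      have e1 : Real.log c0 ≤ Real.log c0 * (I + 1) :=
        le_mul_of_one_le_right hlogc0 (by linarith)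
      nlinarith [hIK]
    calc (M:ℝ) ≤ c0 * Real.exp K := h3
      _ = Real.exp (Real.log c0 + K) := h4
      _ ≤ _ := Real.exp_le_exp.2 h5
  have hcard : (S₀.card : ℝ)
      ≤ (Fintype.card R : ℝ) * Real.exp ((Real.log c0 + 16 / η) * (I + 1)) := by
    have h1 : S₀.card ≤ Fintype.card R * M :=
      hS₀card.trans ((Finset.card_filter_le _ _).trans hAcardR)
    have h2 : (S₀.card : ℝ) ≤ (Fintype.card R : ℝ) * (M:ℝ) := by exact_mod_cast h1
    calc (S₀.card:ℝ) ≤ (Fintype.card R:ℝ) * M := h2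
      _ ≤ _ := mul_le_mul_of_nonneg_left hMle (by positivity)
  -- uncovered mass bound
  set badsum : ℝ := ∑ i, ∑ j, if (Q i j ≠ 0 ∧ ¬ (Q i j * mR f Q (f i) ≤ Real.exp K * (mS Q i * mT Q j))) then Q i j else 0 with hbadsumdef
  have hbadsum0 : 0 ≤ badsum := by
    rw [hbadsumdef]
    refine Finset.sum_nonneg fun i _ => Finset.sum_nonneg fun j _ => ?_
    split
    · exact hQ0 i j
    · exact le_rfl
  have hmarkov : K * badsum ≤ Jfun f Q + 1 := by
    rw [hbadsumdef]
    exact markov hQ0 hsuppQ htotQle hK0.le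
  have hbm_sum : ∑ j, bm j = badsum := by
    simp only [hbmdef, hbadsumdef]
    rw [Finset.sum_comm]
  have h2bs : 2 * badsum ≤ η / 2 := by
    have hb' : 8 * (I + 2) * badsum ≤ η * (I + 3) := by
      have e : 8 * (I + 2) * badsum = η * (K * badsum) := by
        rw [hKdef]
        field_simp
      rw [e]
      have hKb : K * badsum ≤ I + 3 := le_trans hmarkov (by linarith [hJQ])
      exact mul_le_mul_of_nonneg_left hKb hη0.le
    nlinarith [hbadsum0, hI0, hη0]
  have hsplitcol : ∀ j, mT Q j = gm j + bm j := by
    intro j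
    simp only [hgmdef, hbmdef]
    rw [← Finset.sum_add_distrib]
    have e0 : mT Q j = ∑ i, Q i j := rfl
    rw [e0]
    refine Finset.sum_congr rfl fun i _ => ?_
    by_cases h1 : Q i j = 0
    · simp [h1]
    · by_cases h2 : Q i j * mR f Q (f i) ≤ Real.exp K * (mS Q i * mT Q j)
      · rw [if_pos ⟨h1, h2⟩, if_neg (fun hb => hb.2 h2)]
        ring
      · rw [if_neg (fun hb => h2 hb.2), if_pos ⟨h1, h2⟩]
        ring
  set itm : T → ℝ := fun j => if j ∈ GFin (g j)
      then (if ∀ i ∈ Afam (g j), ¬ (Q i j ≠ 0) then mT Q j else 0) else 0 with hitmdef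
  have hitm0 : ∀ j, 0 ≤ itm j := by
    intro j
    simp only [hitmdef]
    split
    · split
      · exact mT_nonneg hQ0 j
      · exact le_rfl
    · exact le_rfl
  have hkey : ∀ j ∈ Finset.univ \ Cov, mT Q j ≤ 2 * bm j + itm j := by
    intro j hj
    rw [Finset.mem_sdiff] at hj
    obtain ⟨-, hjn⟩ := hj
    have hjn2 : ∀ i ∈ A', Q i j = 0 := by
      intro i hi
      by_contra hne2
      exact hjn (by rw [hCovdef, Finset.mem_filter]; exact ⟨Finset.mem_univ j, ⟨i, hi, hne2⟩⟩)
    by_cases hmT0 : mT Q j = 0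
    · rw [hmT0]
      have := hbm0 j
      have := hitm0 j
      linarith
    by_cases hhalf : mT Q j ≤ 2 * gm j
    · have hmem : j ∈ GFin (g j) := by
        rw [hGFdef, Finset.mem_filter]
        exact ⟨Finset.mem_univ j, rfl, hmT0, hhalf⟩
      have hunc : ∀ i ∈ Afam (g j), ¬ (Q i j ≠ 0) := by
        intro i hi hQne
        have hiA : i ∈ A := by
          rw [hAdef]
          exact Finset.mem_biUnion.2 ⟨g j, Finset.mem_univ _, hi⟩
        have hiS : mS Q i ≠ 0 := by
          have hq1 : 0 < Q i j := (hQ0 i j).lt_of_ne (Ne.symm hQne)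
          have hq2 := q_le_mS hQ0 i j
          intro h0
          rw [h0] at hq2
          linarith
        exact hQne (hjn2 i (by rw [hA'def, Finset.mem_filter]; exact ⟨hiA, hiS⟩))
      have hitm : itm j = mT Q j := by
        simp only [hitmdef]
        rw [if_pos hmem, if_pos hunc]
      rw [hitm]
      have := hbm0 j
      linarith
    · push_neg at hhalf
      have h1 := hsplitcol j
      have := hitm0 j
      linarith
  have huncov : ∑ j ∈ Finset.univ \ Cov, mT Q j < η := by
    have hstep1 : ∑ j ∈ Finset.univ \ Cov, mT Q j ≤ ∑ j : T, (2 * bm j + itm j) := by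
      refine le_trans (Finset.sum_le_sum hkey) ?_
      refine Finset.sum_le_sum_of_subset_of_nonneg (Finset.sdiff_subset) ?_
      intro j _ _
      have := hbm0 j
      have := hitm0 j
      linarith
    have hstep2 : ∑ j : T, (2 * bm j + itm j) = 2 * badsum + ∑ j : T, itm j := by
      rw [Finset.sum_add_distrib, ← Finset.mul_sum, hbm_sum]
    have hstep3 : ∑ j : T, itm j
        = ∑ ρ : R, ∑ j ∈ GFin ρ, (if ∀ i ∈ Afam ρ, ¬ (Q i j ≠ 0) then mT Q j else 0) := by
      have e1 : ∀ ρ, (∑ j ∈ GFin ρ, (if ∀ i ∈ Afam ρ, ¬ (Q i j ≠ 0) then mT Q j else 0))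
          = ∑ j : T, (if j ∈ GFin ρ then (if ∀ i ∈ Afam ρ, ¬ (Q i j ≠ 0) then mT Q j else 0) else 0) := by
        intro ρ
        rw [Finset.sum_ite_mem, Finset.univ_inter]
      rw [Finset.sum_congr rfl fun ρ _ => e1 ρ, Finset.sum_comm]
      refine Finset.sum_congr rfl fun j _ => ?_
      have e4 : ∀ ρ : R, (if j ∈ GFin ρ then (if ∀ i ∈ Afam ρ, ¬ (Q i j ≠ 0) then mT Q j else 0) else 0)
          = if ρ = g j then itm j else 0 := by
        intro ρ
        by_cases hρ : ρ = g j
        · subst hρ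
          simp [hitmdef]
        · have hmem : j ∉ GFin ρ := by
            intro hmem
            rw [hGFdef, Finset.mem_filter] at hmem
            exact hρ hmem.2.1.symm
          rw [if_neg hmem, if_neg hρ]
      rw [Finset.sum_congr rfl fun ρ _ => e4 ρ, Finset.sum_ite_eq']
      simp
    have hstep4 : ∀ ρ : R, (∑ j ∈ GFin ρ, (if ∀ i ∈ Afam ρ, ¬ (Q i j ≠ 0) then mT Q j else 0))
        ≤ (1 - θ) ^ M * mR f Q ρ := by
      intro ρ
      refine le_trans (hAunc ρ) ?_
      refine mul_le_mul_of_nonneg_left ?_ (pow_nonneg (by linarith) M)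
      rw [mR_eq_T hsuppQ ρ]
      have e2 : ∑ j ∈ GFin ρ, mT Q j = ∑ j : T, (if j ∈ GFin ρ then mT Q j else 0) := by
        rw [Finset.sum_ite_mem, Finset.univ_inter]
      rw [e2]
      refine Finset.sum_le_sum fun j _ => ?_
      by_cases hm : j ∈ GFin ρ
      · rw [if_pos hm]
        have hgjρ : g j = ρ := by
          rw [hGFdef, Finset.mem_filter] at hm
          exact hm.2.1
        rw [if_pos hgjρ]
      · rw [if_neg hm]
        split
        · exact mT_nonneg hQ0 j
        · exact le_rfl
    have hsumR : ∑ ρ : R, mR f Q ρ = (μ U).toReal := by rw [sum_mR, htotQ]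
    have hpowle : (1 - θ) ^ M ≤ η / 4 := by
      have h1 : (1 - θ) ≤ Real.exp (-θ) := by
        have := Real.add_one_le_exp (-θ)
        linarith
      have h2 : (1 - θ) ^ M ≤ Real.exp (-θ) ^ M := pow_le_pow_left₀ (by linarith) h1 M
      have h3 : Real.exp (-θ) ^ M = Real.exp (-(θ * M)) := by
        rw [← Real.exp_nat_mul]
        congr 1
        ring
      have h4 : Real.log (4 / η) ≤ θ * M := by
        have h5 := Nat.le_ceil (Real.log (4 / η) / θ)
        rw [← hMdef] at h5
        calc Real.log (4 / η) = θ * (Real.log (4 / η) / θ) := by field_simp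
          _ ≤ θ * M := mul_le_mul_of_nonneg_left h5 hθ0.le
      have h6 : Real.exp (-(θ * M)) ≤ η / 4 := by
        rw [show η / 4 = Real.exp (Real.log (η / 4)) from (Real.exp_log (by positivity)).symm]
        apply Real.exp_le_exp.2
        have h7 : Real.log (η / 4) = - Real.log (4 / η) := by
          rw [← Real.log_inv, inv_div]
        rw [h7]
        linarith
      calc (1 - θ) ^ M ≤ Real.exp (-θ) ^ M := h2
        _ = Real.exp (-(θ * M)) := h3
        _ ≤ η / 4 := h6
    have hstep5 : ∑ j : T, itm j ≤ η / 4 := by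
      rw [hstep3]
      calc (∑ ρ : R, ∑ j ∈ GFin ρ, (if ∀ i ∈ Afam ρ, ¬ (Q i j ≠ 0) then mT Q j else 0))
          ≤ ∑ ρ : R, (1 - θ) ^ M * mR f Q ρ := Finset.sum_le_sum fun ρ _ => hstep4 ρ
        _ = (1 - θ) ^ M * ∑ ρ : R, mR f Q ρ := by rw [Finset.mul_sum]
        _ ≤ (η / 4) * 1 := by
            refine mul_le_mul hpowle ?_ ?_ (by positivity)
            · rw [hsumR]; exact hμU1
            · rw [hsumR]; exact ENNReal.toReal_nonneg
        _ = η / 4 := by ring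
    calc ∑ j ∈ Finset.univ \ Cov, mT Q j ≤ ∑ j : T, (2 * bm j + itm j) := hstep1
      _ = 2 * badsum + ∑ j : T, itm j := hstep2
      _ ≤ η / 2 + η / 4 := by linarith [h2bs, hstep5]
      _ < η := by linarith
  refine ⟨S₀, hS₀U, hcard, ?_⟩
  have e1 : ∑ j ∈ Finset.univ \ Cov, mT Q j + ∑ j ∈ Cov, mT Q j = ∑ j : T, mT Q j :=
    Finset.sum_sdiff (Finset.subset_univ Cov)
  have e2 : ∑ j ∈ Cov, mT Q j
      ≤ (μ (U ∩ {x | ∃ w ∈ U, t x = t w ∧ ∃ z ∈ S₀, s w = s z})).toReal := by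
    have e3 : ∑ j ∈ Cov, mT Q j = (μ (U ∩ t ⁻¹' ↑Cov)).toReal := by
      rw [Finset.sum_congr rfl fun j _ => hmTQ j]
      exact meas_part' μ t ht U hUm Cov
    rw [e3]
    exact ENNReal.toReal_mono (measure_ne_top μ _) (measure_mono hsub)
  linarith [htotT, e1, e2, huncov]
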